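/- In the diamond D_n, suppose that in each odd row R_j ∩ Q of the top-right quadrant Q there exists a closed vertex ⟨i,j⟩ with i ∉ {1, 2n−1}. Then there exists a matching M of Q such that: (i) every open odd vertex of Q is matched; and (iii) every vertex ⟨2n−1, j⟩ in the rightmost column of Q is matched to ⟨2n−2, j−1⟩. -/

import Mathlib

/-- The nearest-neighbour grid graph on `ℤ²`. -/
def gridGraph : SimpleGraph (ℤ × ℤ) where
  Adj u v := |u.1 - v.1| + |u.2 - v.2| = 1
  symm := by
    constructor
    intro u v h
    simpa [abs_sub_comm] using h
  loopless := by
    constructor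
    intro u h
    simp at h

/-- The diamond `D_n = {u ∈ ℤ² : ‖u‖₁ < 2n}`. -/
def diamond (n : ℕ) : Set (ℤ × ℤ) :=
  {u | |u.1| + |u.2| < 2 * n}

/-- The top-right quadrant `Q` of the diamond `D_n`: the vertices with column
index `i = u.1 + u.2 ∈ [1, 2n-1]` and row index `j = u.2 - u.1 ∈ [0, 2n-1]`. -/
def quadrant (n : ℕ) : Set (ℤ × ℤ) :=
  {u | 1 ≤ u.1 + u.2 ∧ u.1 + u.2 ≤ 2 * n - 1 ∧ 0 ≤ u.2 - u.1 ∧ u.2 - u.1 ≤ 2 * n - 1}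

/-- Partner function: an odd vertex in a row with closed column `c j` is
matched down-left if it is right of the closed column, down-right otherwise. -/
def pfun (c : ℤ → ℤ) (u : ℤ × ℤ) : ℤ × ℤ :=
  if c (u.2 - u.1) < u.1 + u.2 then (u.1, u.2 - 1) else (u.1 + 1, u.2)

/-- The odd vertices of the quadrant that get matched. -/
def Pset (n : ℕ) (c : ℤ → ℤ) : Set (ℤ × ℤ) :=
  {u | u ∈ quadrant n ∧ Odd (u.1 + u.2) ∧ u.1 + u.2 ≠ c (u.2 - u.1)}

lemma pfun_branch (c : ℤ → ℤ) (u : ℤ × ℤ) :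
    (c (u.2 - u.1) < u.1 + u.2 ∧ pfun c u = (u.1, u.2 - 1)) ∨
    (¬ c (u.2 - u.1) < u.1 + u.2 ∧ pfun c u = (u.1 + 1, u.2)) := by
  unfold pfun
  split
  · exact Or.inl ⟨by assumption, rfl⟩
  · exact Or.inr ⟨by assumption, rfl⟩

/-- The matching subgraph. -/
def Msub (n : ℕ) (c : ℤ → ℤ) : gridGraph.Subgraph where
  verts := {a | ∃ u ∈ Pset n c, a = u ∨ a = pfun c u}
  Adj a b := ∃ u ∈ Pset n c, (a = u ∧ b = pfun c u) ∨ (a = pfun c u ∧ b = u)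
  adj_sub := by
    rintro a b ⟨u, _, (⟨rfl, rfl⟩ | ⟨rfl, rfl⟩)⟩
    · show |a.1 - (pfun c a).1| + |a.2 - (pfun c a).2| = 1
      rcases pfun_branch c a with ⟨_, h⟩ | ⟨_, h⟩ <;> rw [h] <;> simp
    · show |(pfun c b).1 - b.1| + |(pfun c b).2 - b.2| = 1
      rcases pfun_branch c b with ⟨_, h⟩ | ⟨_, h⟩ <;> rw [h] <;> simp
  edge_vert := by
    rintro v w ⟨u, hu, (⟨rfl, _⟩ | ⟨rfl, _⟩)⟩
    · exact ⟨v, hu, Or.inl rfl⟩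
    · exact ⟨u, hu, Or.inr rfl⟩
  symm := by
    constructor
    rintro v w ⟨u, hu, h⟩
    exact ⟨u, hu, h.symm.imp And.symm And.symm⟩

/-- Basic numeric facts about a member of `Pset`. -/
lemma Pset_facts {n : ℕ} {c : ℤ → ℤ} {u : ℤ × ℤ} (hu : u ∈ Pset n c) :
    1 ≤ u.1 + u.2 ∧ u.1 + u.2 ≤ 2 * n - 1 ∧ 1 ≤ u.2 - u.1 ∧ u.2 - u.1 ≤ 2 * n - 1 ∧
    (u.1 + u.2) % 2 = 1 ∧ (u.2 - u.1) % 2 = 1 ∧ u.1 + u.2 ≠ c (u.2 - u.1) := by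
  obtain ⟨hq, hodd, hne⟩ := hu
  simp only [quadrant, Set.mem_setOf_eq] at hq
  have hs : (u.1 + u.2) % 2 = 1 := Int.odd_iff.mp hodd
  refine ⟨hq.1, hq.2.1, by omega, hq.2.2.2, hs, by omega, hne⟩

/-- Key injectivity: distinct matched odd vertices have distinct partners. -/
lemma pfun_inj {n : ℕ} {c : ℤ → ℤ}
    (Hc : ∀ j : ℤ, j % 2 = 1 → 1 ≤ j → j ≤ 2 * n - 1 → (c j) % 2 = 1)
    {u u' : ℤ × ℤ} (hu : u ∈ Pset n c) (hu' : u' ∈ Pset n c)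
    (heq : pfun c u = pfun c u') : u = u' := by
  have f := Pset_facts hu
  have f' := Pset_facts hu'
  rcases pfun_branch c u with ⟨h1, e1⟩ | ⟨h1, e1⟩ <;>
    rcases pfun_branch c u' with ⟨h2, e2⟩ | ⟨h2, e2⟩ <;>
    rw [e1, e2, Prod.mk.injEq] at heq
  · exact Prod.ext heq.1 (by omega)
  · -- u right of c, u' left of c : contradiction via parity of c
    exfalso
    have hj : u.2 - u.1 = u'.2 - u'.1 := by omega
    rw [hj] at h1
    have hodd := Hc (u'.2 - u'.1) f'.2.2.2.2.2.1 f'.2.2.1 f'.2.2.2.1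
    have hne := f'.2.2.2.2.2.2
    omega
  · exfalso
    have hj : u.2 - u.1 = u'.2 - u'.1 := by omega
    rw [hj] at h1
    have hodd := Hc (u'.2 - u'.1) f'.2.2.2.2.2.1 f'.2.2.1 f'.2.2.2.1
    have hne := f.2.2.2.2.2.2
    rw [hj] at hne
    omega
  · exact Prod.ext (by omega) heq.2

/-- The partner of a matched odd vertex has even coordinate sum. -/
lemma pfun_even {c : ℤ → ℤ} {u : ℤ × ℤ} (hodd : (u.1 + u.2) % 2 = 1) :
    ((pfun c u).1 + (pfun c u).2) % 2 = 0 := by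
  rcases pfun_branch c u with ⟨_, e⟩ | ⟨_, e⟩ <;> rw [e] <;> simp <;> omega

/-- The partner of a matched odd vertex stays in the quadrant. -/
lemma pfun_mem_quadrant {n : ℕ} {c : ℤ → ℤ}
    (Hc : ∀ j : ℤ, j % 2 = 1 → 1 ≤ j → j ≤ 2 * n - 1 → 1 ≤ c j ∧ c j ≤ 2 * n - 1)
    {u : ℤ × ℤ} (hu : u ∈ Pset n c) : pfun c u ∈ quadrant n := by
  have f := Pset_facts hu
  have hc := Hc (u.2 - u.1) f.2.2.2.2.2.1 f.2.2.1 f.2.2.2.1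
  rcases pfun_branch c u with ⟨h1, e⟩ | ⟨h1, e⟩ <;> rw [e] <;>
    exact ⟨by omega, by omega, by omega, by omega⟩

lemma Msub_isMatching {n : ℕ} {c : ℤ → ℤ}
    (Hc : ∀ j : ℤ, j % 2 = 1 → 1 ≤ j → j ≤ 2 * n - 1 → (c j) % 2 = 1) :
    (Msub n c).IsMatching := by
  rintro v ⟨u, hu, hv⟩
  rcases hv with rfl | rfl
  · refine ⟨pfun c v, ⟨v, hu, Or.inl ⟨rfl, rfl⟩⟩, ?_⟩
    rintro w ⟨u', hu', (⟨h1, rfl⟩ | ⟨h1, rfl⟩)⟩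
    · rw [← h1]
    · exfalso
      have he := pfun_even (c := c) (Pset_facts hu').2.2.2.2.1
      rw [← h1] at he
      have ho := (Pset_facts hu).2.2.2.2.1
      omega
  · refine ⟨u, ⟨u, hu, Or.inr ⟨rfl, rfl⟩⟩, ?_⟩
    rintro w ⟨u', hu', (⟨h1, rfl⟩ | ⟨h1, rfl⟩)⟩
    · exfalso
      have he := pfun_even (c := c) (Pset_facts hu).2.2.2.2.1
      rw [h1] at he
      have ho := (Pset_facts hu').2.2.2.2.1
      omega
    · exact (pfun_inj Hc hu' hu h1.symm)

theorem quadrant_matching_all_open_odd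
    (n : ℕ) (hn : 0 < n) (closed : Set (ℤ × ℤ))
    (hco : ∀ u ∈ closed, Odd (u.1 + u.2))
    (hrows : ∀ j : ℤ, Odd j → 1 ≤ j → j ≤ 2 * n - 1 →
      ∃ u ∈ quadrant n ∩ closed, u.2 - u.1 = j ∧ u.1 + u.2 ≠ 1 ∧ u.1 + u.2 ≠ 2 * n - 1) :
    ∃ M : gridGraph.Subgraph, M.verts ⊆ quadrant n ∧ M.IsMatching ∧
      (∀ u ∈ quadrant n, Odd (u.1 + u.2) → u ∉ closed → u ∈ M.verts) ∧
      (∀ u ∈ quadrant n, u.1 + u.2 = 2 * n - 1 → M.Adj u (u.1, u.2 - 1)) := by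
  classical
  have hrows' : ∀ j : ℤ, ∃ u : ℤ × ℤ, (j % 2 = 1 ∧ 1 ≤ j ∧ j ≤ 2 * n - 1) →
      (u ∈ quadrant n ∧ u ∈ closed ∧ u.2 - u.1 = j ∧ u.1 + u.2 ≠ 1 ∧
        u.1 + u.2 ≠ 2 * n - 1) := by
    intro j
    by_cases h : j % 2 = 1 ∧ 1 ≤ j ∧ j ≤ 2 * n - 1
    · obtain ⟨u, hu, h1, h2, h3⟩ := hrows j (Int.odd_iff.mpr h.1) h.2.1 h.2.2
      exact ⟨u, fun _ => ⟨hu.1, hu.2, h1, h2, h3⟩⟩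
    · exact ⟨0, fun h' => absurd h' h⟩
  choose w hw using hrows'
  set c : ℤ → ℤ := fun j => (w j).1 + (w j).2 with hcdef
  have hcfact : ∀ j : ℤ, j % 2 = 1 → 1 ≤ j → j ≤ 2 * n - 1 →
      (c j) % 2 = 1 ∧ 1 ≤ c j ∧ c j ≤ 2 * n - 1 ∧ c j ≠ 2 * n - 1 ∧
      (w j).2 - (w j).1 = j ∧ w j ∈ closed := by
    intro j h1 h2 h3
    obtain ⟨hq, hcl, hrow, _, hne2⟩ := hw j ⟨h1, h2, h3⟩
    simp only [quadrant, Set.mem_setOf_eq] at hq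
    exact ⟨Int.odd_iff.mp (hco _ hcl), hq.1, hq.2.1, hne2, hrow, hcl⟩
  have Hc1 : ∀ j : ℤ, j % 2 = 1 → 1 ≤ j → j ≤ 2 * n - 1 → (c j) % 2 = 1 :=
    fun j a b d => (hcfact j a b d).1
  have Hc2 : ∀ j : ℤ, j % 2 = 1 → 1 ≤ j → j ≤ 2 * n - 1 → 1 ≤ c j ∧ c j ≤ 2 * n - 1 :=
    fun j a b d => ⟨(hcfact j a b d).2.1, (hcfact j a b d).2.2.1⟩
  refine ⟨Msub n c, ?_, Msub_isMatching Hc1, ?_, ?_⟩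
  · rintro v ⟨u, hu, (rfl | rfl)⟩
    · exact hu.1
    · exact pfun_mem_quadrant Hc2 hu
  · -- every open odd vertex of Q is matched
    intro u hq hodd hcl
    have hmem : u ∈ Pset n c := by
      refine ⟨hq, hodd, ?_⟩
      intro hcontra
      simp only [quadrant, Set.mem_setOf_eq] at hq
      have hs : (u.1 + u.2) % 2 = 1 := Int.odd_iff.mp hodd
      have hj1 : (u.2 - u.1) % 2 = 1 := by omega
      have hj2 : 1 ≤ u.2 - u.1 := by omega
      have hf := hcfact (u.2 - u.1) hj1 hj2 hq.2.2.2
      -- w (u.2 - u.1) = u, contradicting openness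
      have h1 : (w (u.2 - u.1)).1 + (w (u.2 - u.1)).2 = u.1 + u.2 := hcontra.symm
      have h2 : (w (u.2 - u.1)).2 - (w (u.2 - u.1)).1 = u.2 - u.1 := hf.2.2.2.2.1
      have : w (u.2 - u.1) = u := Prod.ext (by omega) (by omega)
      exact hcl (this ▸ hf.2.2.2.2.2)
    exact ⟨u, hmem, Or.inl rfl⟩
  · -- rightmost column matched down-left
    intro u hq hcol
    simp only [quadrant, Set.mem_setOf_eq] at hq
    have hs : (u.1 + u.2) % 2 = 1 := by omega
    have hj1 : (u.2 - u.1) % 2 = 1 := by omega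
    have hj2 : 1 ≤ u.2 - u.1 := by omega
    have hf := hcfact (u.2 - u.1) hj1 hj2 hq.2.2.2
    have hlt : c (u.2 - u.1) < u.1 + u.2 := by omega
    have hmem : u ∈ Pset n c := by
      refine ⟨hq, Int.odd_iff.mpr hs, by omega⟩
    refine ⟨u, hmem, Or.inl ⟨rfl, ?_⟩⟩
    rcases pfun_branch c u with ⟨_, e⟩ | ⟨h2, _⟩
    · exact e.symm
    · exact absurd hlt h2
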